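/- Suppose a sequence of T predictions p_t and context-outcome pairs (x_t, y_t) with y_t ∈ {0,1} satisfies, for every loss ℓ in a class L and every hypothesis h in a class H: PCalErr + (ΔL∘H)-MAErr bounds omniprediction regret. Formally: max over h ∈ H, ℓ ∈ L of Σ_{t=1}^T [ℓ(k_ℓ(p_t(x_t)), y_t) − ℓ(h(x_t), y_t)] is at most sup over proper losses ℓ' of |Σ_t Δℓ'(p_t(x_t))(y_t − p_t(x_t))| plus max over ℓ ∈ L, h ∈ H of |Σ_t Δℓ(h(x_t))(y_t − p_t(x_t))|. -/

import Mathlib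

open Set Finset

/-- proper calibration error plus `(ΔL ∘ H)`-multiaccuracy error
bounds the omniprediction regret: for every `ℓ ∈ L` and `h ∈ H`,
`Σ_t [ℓ(k_ℓ(p_t(x_t)), y_t) − ℓ(h(x_t), y_t)] ≤ PCalErr + MAErr`. -/
theorem omniprediction_regret_le_pcal_add_ma {X : Type*} (T : ℕ)
    (L : Set (ℝ → ℝ → ℝ)) (H : Set (X → ℝ))
    (p : Fin T → X → ℝ) (x : Fin T → X) (y : Fin T → ℝ)
    (hp : ∀ t, p t (x t) ∈ Icc (0:ℝ) 1)
    (hy : ∀ t, y t ∈ ({0, 1} : Set ℝ))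
    (hL : ∀ ℓ ∈ L, ∀ q ∈ Icc (0:ℝ) 1, ∀ b ∈ ({0, 1} : Set ℝ), ℓ q b ∈ Icc (-1:ℝ) 1)
    (hH : ∀ h ∈ H, ∀ z : X, h z ∈ Icc (0:ℝ) 1)
    (k : (ℝ → ℝ → ℝ) → ℝ → ℝ)
    (hk : ∀ ℓ ∈ L, ∀ v ∈ Icc (0:ℝ) 1, k ℓ v ∈ Icc (0:ℝ) 1 ∧
      ∀ q ∈ Icc (0:ℝ) 1,
        v * ℓ (k ℓ v) 1 + (1 - v) * ℓ (k ℓ v) 0 ≤ v * ℓ q 1 + (1 - v) * ℓ q 0) :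
    ∀ ℓ ∈ L, ∀ h ∈ H,
      (∑ t, (ℓ (k ℓ (p t (x t))) (y t) - ℓ (h (x t)) (y t))) ≤
        sSup { s : ℝ | ∃ ℓ' : ℝ → ℝ → ℝ,
          (∀ q ∈ Icc (0:ℝ) 1, ∀ b ∈ ({0, 1} : Set ℝ), ℓ' q b ∈ Icc (-1:ℝ) 1) ∧
          (∀ v ∈ Icc (0:ℝ) 1, ∀ q ∈ Icc (0:ℝ) 1,
            v * ℓ' v 1 + (1 - v) * ℓ' v 0 ≤ v * ℓ' q 1 + (1 - v) * ℓ' q 0) ∧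
          s = |∑ t, (ℓ' (p t (x t)) 1 - ℓ' (p t (x t)) 0) * (y t - p t (x t))| }
        +
        sSup { s : ℝ | ∃ ℓ'' ∈ L, ∃ h' ∈ H,
          s = |∑ t, (ℓ'' (h' (x t)) 1 - ℓ'' (h' (x t)) 0) * (y t - p t (x t))| } := by
  intro ℓ hℓ h hh
  set S1 : Set ℝ := { s : ℝ | ∃ ℓ' : ℝ → ℝ → ℝ,
          (∀ q ∈ Icc (0:ℝ) 1, ∀ b ∈ ({0, 1} : Set ℝ), ℓ' q b ∈ Icc (-1:ℝ) 1) ∧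
          (∀ v ∈ Icc (0:ℝ) 1, ∀ q ∈ Icc (0:ℝ) 1,
            v * ℓ' v 1 + (1 - v) * ℓ' v 0 ≤ v * ℓ' q 1 + (1 - v) * ℓ' q 0) ∧
          s = |∑ t, (ℓ' (p t (x t)) 1 - ℓ' (p t (x t)) 0) * (y t - p t (x t))| } with hS1
  set S2 : Set ℝ := { s : ℝ | ∃ ℓ'' ∈ L, ∃ h' ∈ H,
          s = |∑ t, (ℓ'' (h' (x t)) 1 - ℓ'' (h' (x t)) 0) * (y t - p t (x t))| } with hS2
  -- auxiliary bound for terms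
  have key : ∀ (g : ℝ → ℝ → ℝ), (∀ q ∈ Icc (0:ℝ) 1, ∀ b ∈ ({0,1} : Set ℝ), g q b ∈ Icc (-1:ℝ) 1) →
      ∀ (q : Fin T → ℝ), (∀ t, q t ∈ Icc (0:ℝ) 1) →
      |∑ t, (g (q t) 1 - g (q t) 0) * (y t - p t (x t))| ≤ 2 * T := by
    intro g hg q hq
    calc |∑ t, (g (q t) 1 - g (q t) 0) * (y t - p t (x t))|
        ≤ ∑ t, |(g (q t) 1 - g (q t) 0) * (y t - p t (x t))| := Finset.abs_sum_le_sum_abs _ _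
      _ ≤ ∑ _t : Fin T, (2:ℝ) := by
          apply Finset.sum_le_sum
          intro t _
          rw [abs_mul]
          have h1 := hg (q t) (hq t) 1 (by simp)
          have h0 := hg (q t) (hq t) 0 (by simp)
          have hpt := hp t
          have hyt := hy t
          simp only [Set.mem_Icc] at h1 h0 hpt
          have ha : |g (q t) 1 - g (q t) 0| ≤ 2 := by
            rw [abs_le]; constructor <;> linarith [h1.1, h1.2, h0.1, h0.2]
          have hb : |y t - p t (x t)| ≤ 1 := by
            simp only [Set.mem_insert_iff, Set.mem_singleton_iff] at hyt
            rcases hyt with h' | h' <;>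
              rw [h', abs_le] <;> constructor <;> linarith [hpt.1, hpt.2]
          calc |g (q t) 1 - g (q t) 0| * |y t - p t (x t)| ≤ 2 * 1 :=
                mul_le_mul ha hb (abs_nonneg _) (by norm_num)
            _ = 2 := by ring
      _ = 2 * T := by simp [mul_comm]
  have hbdd1 : BddAbove S1 := by
    refine ⟨2 * T, ?_⟩
    rintro s ⟨ℓ', hb, _, rfl⟩
    exact key ℓ' hb (fun t => p t (x t)) hp
  have hbdd2 : BddAbove S2 := by
    refine ⟨2 * T, ?_⟩
    rintro s ⟨ℓ'', hℓ'', h', hh', rfl⟩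
    exact key ℓ'' (hL ℓ'' hℓ'') (fun t => h' (x t)) (fun t => hH h' hh' (x t))
  -- the two candidate elements
  have hmem1 : |∑ t, (ℓ (k ℓ (p t (x t))) 1 - ℓ (k ℓ (p t (x t))) 0) * (y t - p t (x t))| ∈ S1 := by
    refine ⟨fun q b => ℓ (k ℓ q) b, ?_, ?_, rfl⟩
    · intro q hq b hb
      exact hL ℓ hℓ (k ℓ q) (hk ℓ hℓ q hq).1 b hb
    · intro v hv q hq
      exact (hk ℓ hℓ v hv).2 (k ℓ q) (hk ℓ hℓ q hq).1
  have hmem2 : |∑ t, (ℓ (h (x t)) 1 - ℓ (h (x t)) 0) * (y t - p t (x t))| ∈ S2 :=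
    ⟨ℓ, hℓ, h, hh, rfl⟩
  -- pointwise decomposition
  have hpt : ∀ t : Fin T,
      ℓ (k ℓ (p t (x t))) (y t) - ℓ (h (x t)) (y t) ≤
        (ℓ (k ℓ (p t (x t))) 1 - ℓ (k ℓ (p t (x t))) 0) * (y t - p t (x t))
        - (ℓ (h (x t)) 1 - ℓ (h (x t)) 0) * (y t - p t (x t)) := by
    intro t
    have hopt := (hk ℓ hℓ (p t (x t)) (hp t)).2 (h (x t)) (Set.mem_Icc.mpr ⟨(hH h hh (x t)).1, (hH h hh (x t)).2⟩)
    have hyt := hy t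
    simp only [Set.mem_insert_iff, Set.mem_singleton_iff] at hyt
    rcases hyt with h' | h' <;> rw [h'] <;> nlinarith [hopt]
  calc (∑ t, (ℓ (k ℓ (p t (x t))) (y t) - ℓ (h (x t)) (y t)))
      ≤ ∑ t, ((ℓ (k ℓ (p t (x t))) 1 - ℓ (k ℓ (p t (x t))) 0) * (y t - p t (x t))
        - (ℓ (h (x t)) 1 - ℓ (h (x t)) 0) * (y t - p t (x t))) :=
        Finset.sum_le_sum (fun t _ => hpt t)
    _ = (∑ t, (ℓ (k ℓ (p t (x t))) 1 - ℓ (k ℓ (p t (x t))) 0) * (y t - p t (x t)))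
        - (∑ t, (ℓ (h (x t)) 1 - ℓ (h (x t)) 0) * (y t - p t (x t))) := Finset.sum_sub_distrib _ _
    _ ≤ |∑ t, (ℓ (k ℓ (p t (x t))) 1 - ℓ (k ℓ (p t (x t))) 0) * (y t - p t (x t))|
        + |∑ t, (ℓ (h (x t)) 1 - ℓ (h (x t)) 0) * (y t - p t (x t))| := by
        have := le_abs_self (∑ t, (ℓ (k ℓ (p t (x t))) 1 - ℓ (k ℓ (p t (x t))) 0) * (y t - p t (x t)))
        have := neg_abs_le (∑ t, (ℓ (h (x t)) 1 - ℓ (h (x t)) 0) * (y t - p t (x t)))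
        linarith
    _ ≤ sSup S1 + sSup S2 :=
        add_le_add (le_csSup hbdd1 hmem1) (le_csSup hbdd2 hmem2)
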